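/- For all reals A < B, Φ(B) − Φ(A) + A·φ(A) − B·φ(B) + φ(A)²/Φ(A) + φ(B)²/(1 − Φ(B)) ≤ 1. (This states that the Fisher information of the rectified Gaussian N^R(θ, 1, [a,b]) in its location parameter θ, which equals the left-hand side with A = a−θ and B = b−θ, is at most the Fisher information 1 of the Gaussian N(θ,1); by the scaling θ ↦ θ/σ this yields the bound η^B ≤ η = 1/σ for every noise scale σ.) -/

import Mathlib

open MeasureTheory Real Filter

/-- Standard Gaussian density. -/
noncomputable def phi (x : ℝ) : ℝ := (Real.sqrt (2 * Real.pi))⁻¹ * Real.exp (-(x ^ 2) / 2)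

/-- Standard Gaussian cumulative distribution function. -/
noncomputable def Phi (x : ℝ) : ℝ := ∫ t in Set.Iic x, phi t

open Set Topology

lemma phi_eq (x : ℝ) : phi x = (Real.sqrt (2 * Real.pi))⁻¹ * Real.exp (-(1/2) * x ^ 2) := by
  unfold phi; ring_nf

lemma phi_pos (x : ℝ) : 0 < phi x := by
  have h : 0 < Real.sqrt (2 * Real.pi) := Real.sqrt_pos.2 (by positivity)
  exact mul_pos (inv_pos.2 h) (Real.exp_pos _)

lemma integrable_phi : Integrable phi := by
  have h := (integrable_exp_neg_mul_sq (by norm_num : (0:ℝ) < 1/2)).const_mul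
    (Real.sqrt (2 * Real.pi))⁻¹
  exact h.congr (Filter.Eventually.of_forall fun x => by rw [phi_eq])

lemma integrable_xphi : Integrable (fun x => x * phi x) := by
  have h := (integrable_rpow_mul_exp_neg_mul_sq (by norm_num : (0:ℝ) < 1/2)
    (by norm_num : (-1:ℝ) < 1)).const_mul (Real.sqrt (2 * Real.pi))⁻¹
  refine h.congr (Filter.Eventually.of_forall fun x => ?_)
  simp only [Real.rpow_one, phi_eq]; ring

lemma integrable_sqphi : Integrable (fun x => x ^ 2 * phi x) := by
  have h := (integrable_rpow_mul_exp_neg_mul_sq (by norm_num : (0:ℝ) < 1/2)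
    (by norm_num : (-1:ℝ) < 2)).const_mul (Real.sqrt (2 * Real.pi))⁻¹
  refine h.congr (Filter.Eventually.of_forall fun x => ?_)
  have : (x : ℝ) ^ (2:ℝ) = x ^ (2:ℕ) := by
    rw [show ((2:ℝ) = ((2:ℕ):ℝ)) by norm_num, Real.rpow_natCast]
  simp only [this, phi_eq]; ring

lemma integrable_negxphi : Integrable (fun x : ℝ => -(x * phi x)) := integrable_xphi.neg

lemma hasDerivAt_phi (x : ℝ) : HasDerivAt phi (-(x * phi x)) x := by
  have h1 : HasDerivAt (fun t : ℝ => -(t ^ 2) / 2) (-x) x := by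
    have h : HasDerivAt (fun t : ℝ => -(t ^ 2) / 2) _ x := ((hasDerivAt_pow 2 x).neg).div_const 2
    convert h using 1
    ring
  have h2 := (h1.exp).const_mul (Real.sqrt (2 * Real.pi))⁻¹
  have he : -(x * phi x) = (Real.sqrt (2 * Real.pi))⁻¹ * (Real.exp (-(x ^ 2) / 2) * -x) := by
    unfold phi; ring
  rw [he]
  exact h2

lemma hasDerivAt_xphi (x : ℝ) :
    HasDerivAt (fun t => -(t * phi t)) ((x ^ 2 - 1) * phi x) x := by
  have h := (((hasDerivAt_id x).mul (hasDerivAt_phi x))).neg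
  have he : (x ^ 2 - 1) * phi x = -(1 * phi x + x * -(x * phi x)) := by ring
  rw [he]
  exact h

lemma tendsto_phi_atTop : Tendsto phi atTop (𝓝 0) := by
  have h1 : Tendsto (fun x : ℝ => -(x ^ 2) / 2) atTop atBot := by
    apply Filter.Tendsto.atBot_div_const (by norm_num : (0:ℝ) < 2)
    exact tendsto_neg_atTop_atBot.comp (tendsto_pow_atTop (by norm_num))
  have h2 := Real.tendsto_exp_atBot.comp h1
  have h3 := h2.const_mul (Real.sqrt (2 * Real.pi))⁻¹
  rw [mul_zero] at h3
  exact h3.congr fun x => rfl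

lemma tendsto_phi_atBot : Tendsto phi atBot (𝓝 0) := by
  have h := tendsto_phi_atTop.comp tendsto_neg_atBot_atTop
  refine h.congr fun x => ?_
  simp [phi, Function.comp, neg_sq]

lemma tendsto_xphi_atTop : Tendsto (fun x => x * phi x) atTop (𝓝 0) := by
  have h := rpow_mul_exp_neg_mul_sq_isLittleO_exp_neg (by norm_num : (0:ℝ) < 1/2) 1
  have hg : Tendsto (fun x : ℝ => Real.exp (-(1/2) * x)) atTop (𝓝 0) := by
    apply Real.tendsto_exp_atBot.comp
    have h' : Tendsto (fun x : ℝ => (1/2 : ℝ) * x) atTop atTop :=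
      (tendsto_id (α := ℝ)).const_mul_atTop (by norm_num)
    have := tendsto_neg_atTop_atBot.comp h'
    refine this.congr fun x => ?_
    simp [Function.comp]
  have h0 := h.tendsto_zero_of_tendsto hg
  have h1 : Tendsto (fun x : ℝ => x * Real.exp (-(1/2) * x ^ 2)) atTop (𝓝 0) := by
    refine h0.congr fun x => ?_
    rw [Real.rpow_one]
  have h2 := h1.const_mul (Real.sqrt (2 * Real.pi))⁻¹
  rw [mul_zero] at h2
  refine h2.congr fun x => ?_
  rw [phi_eq]; ring

lemma tendsto_xphi_atBot : Tendsto (fun x => x * phi x) atBot (𝓝 0) := by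
  have h := (tendsto_xphi_atTop.neg).comp tendsto_neg_atBot_atTop
  rw [neg_zero] at h
  refine h.congr fun x => ?_
  simp only [Function.comp]
  have hp : phi (-x) = phi x := by simp [phi, neg_sq]
  show -(-x * phi (-x)) = x * phi x
  rw [hp]; ring

lemma tendsto_negxphi_atBot : Tendsto (fun x => -(x * phi x)) atBot (𝓝 0) := by
  simpa using tendsto_xphi_atBot.neg

lemma tendsto_negxphi_atTop : Tendsto (fun x => -(x * phi x)) atTop (𝓝 0) := by
  simpa using tendsto_xphi_atTop.neg

lemma int_Iic_xphi (A : ℝ) : ∫ t in Iic A, -(t * phi t) = phi A := by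
  have h := integral_Iic_of_hasDerivAt_of_tendsto' (f := phi)
    (f' := fun t => -(t * phi t)) (a := A)
    (fun x _ => hasDerivAt_phi x) integrable_negxphi.integrableOn tendsto_phi_atBot
  rw [sub_zero] at h
  exact h

lemma int_Ioi_xphi (B : ℝ) : ∫ t in Ioi B, -(t * phi t) = -phi B := by
  have h := integral_Ioi_of_hasDerivAt_of_tendsto' (f := phi)
    (f' := fun t => -(t * phi t)) (a := B)
    (fun x _ => hasDerivAt_phi x) integrable_negxphi.integrableOn tendsto_phi_atTop
  rw [zero_sub] at h
  exact h

lemma integrable_sqm1phi : Integrable (fun t : ℝ => (t ^ 2 - 1) * phi t) := by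
  refine (integrable_sqphi.sub integrable_phi).congr
    (Filter.Eventually.of_forall fun x => ?_)
  simp only [Pi.sub_apply]; ring

lemma int_Iic_sqphi (A : ℝ) :
    ∫ t in Iic A, t ^ 2 * phi t = Phi A - A * phi A := by
  have h := integral_Iic_of_hasDerivAt_of_tendsto' (f := fun t => -(t * phi t))
    (f' := fun t => (t ^ 2 - 1) * phi t) (a := A)
    (fun x _ => hasDerivAt_xphi x) integrable_sqm1phi.integrableOn tendsto_negxphi_atBot
  rw [sub_zero] at h
  have hsplit : ∫ t in Iic A, (t ^ 2 - 1) * phi t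
      = (∫ t in Iic A, t ^ 2 * phi t) - ∫ t in Iic A, phi t := by
    rw [← integral_sub integrable_sqphi.integrableOn integrable_phi.integrableOn]
    congr 1; funext x; ring
  rw [hsplit] at h
  unfold Phi
  linarith [h]

lemma int_Ioi_sqphi (B : ℝ) :
    ∫ t in Ioi B, t ^ 2 * phi t = (∫ t in Ioi B, phi t) + B * phi B := by
  have h := integral_Ioi_of_hasDerivAt_of_tendsto' (f := fun t => -(t * phi t))
    (f' := fun t => (t ^ 2 - 1) * phi t) (a := B)
    (fun x _ => hasDerivAt_xphi x) integrable_sqm1phi.integrableOn tendsto_negxphi_atTop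
  rw [zero_sub] at h
  have hsplit : ∫ t in Ioi B, (t ^ 2 - 1) * phi t
      = (∫ t in Ioi B, t ^ 2 * phi t) - ∫ t in Ioi B, phi t := by
    rw [← integral_sub integrable_sqphi.integrableOn integrable_phi.integrableOn]
    congr 1; funext x; ring
  rw [hsplit] at h
  linarith [h]

lemma integral_phi : ∫ x, phi x = 1 := by
  have h1 : ∫ x, phi x = (Real.sqrt (2 * Real.pi))⁻¹ * ∫ x, Real.exp (-(1/2) * x ^ 2) := by
    rw [← integral_const_mul]
    congr 1; funext x; rw [phi_eq]
  rw [h1, integral_gaussian, show Real.pi / (1/2) = 2 * Real.pi by ring]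
  exact inv_mul_cancel₀ (ne_of_gt (Real.sqrt_pos.2 (by positivity)))

lemma Phi_add_Ioi (B : ℝ) : Phi B + ∫ t in Ioi B, phi t = 1 := by
  rw [Phi, intervalIntegral.integral_Iic_add_Ioi integrable_phi.integrableOn
    integrable_phi.integrableOn, integral_phi]

lemma setIntegral_phi_pos {s : Set ℝ} (hs : MeasurableSet s) (h : 0 < volume s) :
    0 < ∫ t in s, phi t := by
  rw [setIntegral_pos_iff_support_of_nonneg_ae
    (Filter.Eventually.of_forall fun x => (phi_pos x).le) integrable_phi.integrableOn]
  have hsup : Function.support phi = univ := by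
    ext x; simp [Function.mem_support, ne_of_gt (phi_pos x)]
  rwa [hsup, univ_inter]

lemma Phi_pos (A : ℝ) : 0 < Phi A :=
  setIntegral_phi_pos measurableSet_Iic (by simp [Real.volume_Iic])

lemma Ioi_phi_pos (B : ℝ) : 0 < ∫ t in Ioi B, phi t :=
  setIntegral_phi_pos measurableSet_Ioi (by simp [Real.volume_Ioi])

lemma integral_expand {s : Set ℝ} (c1 c2 c3 : ℝ) :
    ∫ t in s, (c1 * (t ^ 2 * phi t) + c2 * (t * phi t) + c3 * phi t)
      = c1 * (∫ t in s, t ^ 2 * phi t) + c2 * (∫ t in s, t * phi t)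
        + c3 * ∫ t in s, phi t := by
  have hA : IntegrableOn (fun t : ℝ => c1 * (t ^ 2 * phi t)) s :=
    (integrable_sqphi.const_mul c1).integrableOn
  have hB : IntegrableOn (fun t : ℝ => c2 * (t * phi t)) s :=
    (integrable_xphi.const_mul c2).integrableOn
  have hC : IntegrableOn (fun t : ℝ => c3 * phi t) s :=
    (integrable_phi.const_mul c3).integrableOn
  have hAB : IntegrableOn (fun t : ℝ => c1 * (t ^ 2 * phi t) + c2 * (t * phi t)) s :=
    hA.add hB
  have e1 : ∫ t in s, (c1 * (t ^ 2 * phi t) + c2 * (t * phi t) + c3 * phi t)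
      = (∫ t in s, (c1 * (t ^ 2 * phi t) + c2 * (t * phi t))) + ∫ t in s, c3 * phi t :=
    integral_add hAB hC
  have e2 : ∫ t in s, (c1 * (t ^ 2 * phi t) + c2 * (t * phi t))
      = (∫ t in s, c1 * (t ^ 2 * phi t)) + ∫ t in s, c2 * (t * phi t) :=
    integral_add hA hB
  rw [e1, e2, integral_const_mul, integral_const_mul, integral_const_mul]

/-- Cauchy–Schwarz for the Gaussian measure restricted to a set. -/
lemma cs_phi {s : Set ℝ} (hs : MeasurableSet s) (hpos : 0 < ∫ t in s, phi t) :
    (∫ t in s, t * phi t) ^ 2 ≤ (∫ t in s, phi t) * ∫ t in s, t ^ 2 * phi t := by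
  set I0 := ∫ t in s, phi t with hI0
  set I1 := ∫ t in s, t * phi t with hI1
  set I2 := ∫ t in s, t ^ 2 * phi t with hI2
  have key : 0 ≤ ∫ t in s, (I0 * t - I1) ^ 2 * phi t :=
    setIntegral_nonneg hs fun t _ => mul_nonneg (sq_nonneg _) (phi_pos t).le
  have key' : 0 ≤ ∫ t in s,
      (I0 ^ 2 * (t ^ 2 * phi t) + (-(2 * I0 * I1)) * (t * phi t) + I1 ^ 2 * phi t) := by
    refine le_of_le_of_eq key (integral_congr_ae (Filter.Eventually.of_forall fun t => ?_))
    ring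
  rw [integral_expand, ← hI0, ← hI1, ← hI2] at key'
  have h3 : I0 * I1 ^ 2 ≤ I0 * (I0 * I2) := by nlinarith [key']
  exact le_of_mul_le_mul_left h3 hpos

/-- The Fisher information of the rectified Gaussian `N^R(θ, 1, [a,b])` in its
location parameter (with `A = a - θ`, `B = b - θ`) is at most `1`, the Fisher
information of the Gaussian `N(θ, 1)`. -/
theorem rectified_gaussian_fisher_info_le_one (A B : ℝ) (hAB : A < B) :
    Phi B - Phi A + A * phi A - B * phi B +
        phi A ^ 2 / Phi A + phi B ^ 2 / (1 - Phi B) ≤ 1 := by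
  have hQ : 1 - Phi B = ∫ t in Ioi B, phi t := by linarith [Phi_add_Ioi B]
  have hQpos : 0 < 1 - Phi B := by rw [hQ]; exact Ioi_phi_pos B
  have hL : phi A ^ 2 / Phi A ≤ Phi A - A * phi A := by
    have hcs := cs_phi (s := Iic A) measurableSet_Iic (Phi_pos A)
    have h1 : ∫ t in Iic A, t * phi t = -phi A := by
      have h := int_Iic_xphi A
      rw [integral_neg] at h
      linarith
    rw [h1, int_Iic_sqphi A] at hcs
    rw [div_le_iff₀ (Phi_pos A)]
    have : (∫ t in Iic A, phi t) = Phi A := rfl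
    rw [this] at hcs
    nlinarith [hcs]
  have hR : phi B ^ 2 / (1 - Phi B) ≤ (1 - Phi B) + B * phi B := by
    have hcs := cs_phi (s := Ioi B) measurableSet_Ioi (Ioi_phi_pos B)
    have h1 : ∫ t in Ioi B, t * phi t = phi B := by
      have h := int_Ioi_xphi B
      rw [integral_neg] at h
      linarith
    rw [h1, int_Ioi_sqphi B, ← hQ] at hcs
    rw [div_le_iff₀ hQpos]
    nlinarith [hcs]
  linarith
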